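/- Let A = T(a) + E + e v^T, where a is a Wiener-class sequence, E is a semi-infinite matrix with the decay property, and v ∈ ℓ¹. Then ‖A‖_∞ ≥ ‖a‖_W + ‖v‖_1. -/

import Mathlib

open Filter Topology

/-- Every row of `A` is absolutely summable. -/
def RowsSummable (A : ℕ → ℕ → ℝ) : Prop := ∀ i, Summable fun j => |A i j|

/-- The infinity norm of a semi-infinite matrix: the supremum of the row sums. -/
noncomputable def normInf (A : ℕ → ℕ → ℝ) : ℝ := ⨆ i, ∑' j, |A i j|

/-- `A` is bounded: all row sums are finite and their supremum is finite. -/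
def MatBounded (A : ℕ → ℕ → ℝ) : Prop :=
  RowsSummable A ∧ BddAbove (Set.range fun i => ∑' j, |A i j|)

/-- `A` has the decay property: all row sums are finite and tend to zero. -/
def HasDecay (A : ℕ → ℕ → ℝ) : Prop :=
  RowsSummable A ∧ Tendsto (fun i => ∑' j, |A i j|) atTop (𝓝 0)

/-- The semi-infinite Toeplitz matrix associated with a two-sided sequence:
`T(a)_{ij} = a_{j−i}`. -/
noncomputable def Toep (a : ℤ → ℝ) : ℕ → ℕ → ℝ := fun i j => a ((j : ℤ) - (i : ℤ))

/-- Convolution of two-sided sequences. -/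
noncomputable def zconv (a b : ℤ → ℝ) : ℤ → ℝ := fun n => ∑' k : ℤ, a k * b (n - k)

/- STATEMENT 11: if A = T(a) + E + e vᵀ with a Wiener-class, E with the decay
property and v ∈ ℓ¹, then ‖A‖_∞ ≥ ‖a‖_W + ‖v‖_1. -/

theorem stmt11 (a : ℤ → ℝ) (ha : Summable fun n => |a n|)
    (E : ℕ → ℕ → ℝ) (hE : HasDecay E)
    (v : ℕ → ℝ) (hv : Summable fun j => |v j|) :
    (∑' n : ℤ, |a n|) + (∑' j, |v j|) ≤
      normInf (fun i j => Toep a i j + E i j + v j) := by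
  obtain ⟨hErows, hEdecay⟩ := hE
  set S := ∑' n : ℤ, |a n| with hS
  set V := ∑' j : ℕ, |v j| with hV
  have hshift : ∀ g : ℕ → ℤ, Function.Injective g → Summable fun j : ℕ => |a (g j)| := by
    intro g hg
    have := ha.comp_injective hg
    exact this
  simp only [normInf, Toep]
  set f : ℕ → ℝ := fun i : ℕ => ∑' j : ℕ, |a ((j : ℤ) - (i : ℤ)) + E i j + v j| with hf
  have hinjrow : ∀ i : ℕ, Function.Injective (fun j : ℕ => (j : ℤ) - (i : ℤ)) := by
    intro i x y h
    simp only at h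
    omega
  have hsumA : ∀ i : ℕ, Summable fun j : ℕ => |a ((j : ℤ) - (i : ℤ))| :=
    fun i => hshift _ (hinjrow i)
  have hrowA : ∀ i : ℕ, Summable fun j : ℕ => |a ((j : ℤ) - (i : ℤ)) + E i j + v j| := by
    intro i
    refine Summable.of_nonneg_of_le (fun j => abs_nonneg _) (fun j => ?_)
      (((hsumA i).add (hErows i)).add hv)
    exact (abs_add_le _ _).trans (add_le_add (abs_add_le _ _) le_rfl)
  -- row sums are bounded above
  have hrow_le : ∀ i, f i ≤ S + (∑' j, |E i j|) + V := by
    intro i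
    have h1 : ∀ j : ℕ, |a ((j : ℤ) - (i : ℤ)) + E i j + v j| ≤
        |a ((j : ℤ) - (i : ℤ))| + |E i j| + |v j| := fun j =>
      (abs_add_le _ _).trans (add_le_add (abs_add_le _ _) le_rfl)
    have h2 : f i ≤ ∑' j : ℕ, (|a ((j : ℤ) - (i : ℤ))| + |E i j| + |v j|) :=
      Summable.tsum_le_tsum h1 (hrowA i) (((hsumA i).add (hErows i)).add hv)
    rw [Summable.tsum_add ((hsumA i).add (hErows i)) hv, Summable.tsum_add (hsumA i) (hErows i)] at h2
    have h3 : (∑' j : ℕ, |a ((j : ℤ) - (i : ℤ))|) ≤ S := by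
      refine Summable.tsum_le_tsum_of_inj (fun j : ℕ => (j : ℤ) - (i : ℤ)) (hinjrow i)
        (fun c _ => abs_nonneg _) (fun b => le_refl _) (hsumA i) ha
    linarith
  obtain ⟨C, hC⟩ := hEdecay.bddAbove_range
  have hbdd : BddAbove (Set.range f) := by
    refine ⟨S + C + V, ?_⟩
    rintro x ⟨i, rfl⟩
    have := hC ⟨i, rfl⟩
    have := hrow_le i
    linarith
  have key : ∀ ε : ℝ, 0 < ε → ∃ i, S + V - ε ≤ f i := by
    intro ε hε
    set δ := ε / 5 with hδdef
    have hδ : 0 < δ := by positivity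
    -- choose N with a small tail of v
    have hvt : Tendsto (fun N => ∑' k, |v (k + N)|) atTop (𝓝 0) :=
      tendsto_sum_nat_add fun k => |v k|
    obtain ⟨N, hN⟩ := (hvt.eventually (gt_mem_nhds hδ)).exists
    -- choose a finset capturing most of S
    have hTend : Tendsto (fun t : Finset ℤ => ∑ k ∈ t, |a k|) atTop (𝓝 S) := ha.hasSum
    obtain ⟨s, hs⟩ := (hTend.eventually (lt_mem_nhds (sub_lt_self S hδ))).exists
    -- lower bound for s
    obtain ⟨M, hM⟩ := (s.image fun k => (N : ℤ) - k).exists_le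
    set i0 : ℕ := M.toNat with hi0def
    have hi0 : ∀ k ∈ s, (N : ℤ) - (i0 : ℤ) ≤ k := by
      intro k hk
      have h1 := hM _ (Finset.mem_image_of_mem _ hk)
      have h2 : M ≤ (i0 : ℤ) := Int.self_le_toNat M
      linarith
    -- a (j - i) → 0 for each j < N
    have h2 : Tendsto (fun i : ℕ => ∑ j ∈ Finset.range N, |a ((j : ℤ) - (i : ℤ))|)
        atTop (𝓝 0) := by
      have hterm : ∀ j ∈ Finset.range N,
          Tendsto (fun i : ℕ => |a ((j : ℤ) - (i : ℤ))|) atTop (𝓝 0) := by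
        intro j _
        have hinj : Function.Injective (fun i : ℕ => (j : ℤ) - (i : ℤ)) := by
          intro x y h
          simp only at h
          omega
        have ht : Tendsto (fun i : ℕ => (j : ℤ) - (i : ℤ)) atTop cofinite := by
          rw [← Nat.cofinite_eq_atTop]
          exact hinj.tendsto_cofinite
        exact ha.tendsto_cofinite_zero.comp ht
      have := tendsto_finset_sum (Finset.range N) hterm
      simpa using this
    obtain ⟨i, ⟨hEi, hai⟩, hii0⟩ :=
      (((hEdecay.eventually (gt_mem_nhds hδ)).and
        (h2.eventually (gt_mem_nhds hδ))).and (eventually_ge_atTop i0)).exists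
    refine ⟨i, ?_⟩
    -- the perturbation-free row
    set b : ℕ → ℝ := fun j => a ((j : ℤ) - (i : ℤ)) + v j with hb_def
    have hb : Summable fun j : ℕ => |b j| :=
      Summable.of_nonneg_of_le (fun _ => abs_nonneg _) (fun j => abs_add_le _ _)
        ((hsumA i).add hv)
    -- claim 1 : ∑|b| ≤ f i + row sum of E
    have hclaim1 : (∑' j, |b j|) ≤ f i + ∑' j, |E i j| := by
      have h1 : ∀ j : ℕ, |b j| ≤ |a ((j : ℤ) - (i : ℤ)) + E i j + v j| + |E i j| := by
        intro j
        have heq : b j = (a ((j : ℤ) - (i : ℤ)) + E i j + v j) + -(E i j) := by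
          simp only [hb_def]; ring
        rw [heq]
        exact (abs_add_le _ _).trans (by rw [abs_neg])
      have h2 := Summable.tsum_le_tsum h1 hb ((hrowA i).add (hErows i))
      rwa [Summable.tsum_add (hrowA i) (hErows i)] at h2
    -- split at N
    have hsplit : (∑ j ∈ Finset.range N, |b j|) + (∑' j, |b (j + N)|) = ∑' j, |b j| :=
      Summable.sum_add_tsum_nat_add N hb
    -- head bound
    have hvsplit : (∑ j ∈ Finset.range N, |v j|) + (∑' j, |v (j + N)|) = V :=
      Summable.sum_add_tsum_nat_add N hv
    have hhead : V - δ - δ ≤ ∑ j ∈ Finset.range N, |b j| := by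
      have h1 : ∀ j ∈ Finset.range N, |v j| - |a ((j : ℤ) - (i : ℤ))| ≤ |b j| := by
        intro j _
        have heq : v j = b j + -(a ((j : ℤ) - (i : ℤ))) := by simp only [hb_def]; ring
        have h2 : |v j| ≤ |b j| + |a ((j : ℤ) - (i : ℤ))| := by
          rw [heq]
          exact (abs_add_le _ _).trans (by rw [abs_neg])
        linarith
      have h3 : (∑ j ∈ Finset.range N, (|v j| - |a ((j : ℤ) - (i : ℤ))|)) ≤
          ∑ j ∈ Finset.range N, |b j| := Finset.sum_le_sum h1
      rw [Finset.sum_sub_distrib] at h3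
      have h4 : (∑' j, |v (j + N)|) < δ := hN
      linarith
    -- tail bound
    have hva_tail : Summable fun j : ℕ => |v (j + N)| := (summable_nat_add_iff (f := fun j : ℕ => |v j|) N).2 hv
    have hb_tail : Summable fun j : ℕ => |b (j + N)| := (summable_nat_add_iff (f := fun j : ℕ => |b j|) N).2 hb
    have hinj2 : Function.Injective (fun j : ℕ => (j : ℤ) + (N : ℤ) - (i : ℤ)) := by
      intro x y h
      simp only at h
      omega
    have hsa_tail : Summable fun j : ℕ => |a ((j : ℤ) + (N : ℤ) - (i : ℤ))| :=
      hshift _ hinj2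
    have htail1 : (∑' j : ℕ, |a ((j : ℤ) + (N : ℤ) - (i : ℤ))|) - (∑' j, |v (j + N)|) ≤
        ∑' j, |b (j + N)| := by
      have h1 : ∀ j : ℕ, |a ((j : ℤ) + (N : ℤ) - (i : ℤ))| ≤ |b (j + N)| + |v (j + N)| := by
        intro j
        have heq : a ((j : ℤ) + (N : ℤ) - (i : ℤ)) = b (j + N) + -(v (j + N)) := by
          simp only [hb_def]
          push_cast
          ring_nf
        rw [heq]
        exact (abs_add_le _ _).trans (by rw [abs_neg])
      have h2 := Summable.tsum_le_tsum h1 hsa_tail (hb_tail.add hva_tail)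
      rw [Summable.tsum_add hb_tail hva_tail] at h2
      linarith
    have htail2 : S - δ < ∑' j : ℕ, |a ((j : ℤ) + (N : ℤ) - (i : ℤ))| := by
      set c : ℤ := (N : ℤ) - (i : ℤ) with hc_def
      have hc : ∀ k ∈ s, c ≤ k := by
        intro k hk
        have h1 := hi0 k hk
        have h2 : (i0 : ℤ) ≤ (i : ℤ) := by exact_mod_cast hii0
        simp only [hc_def]
        linarith
      set t : Finset ℕ := s.image (fun k => (k - c).toNat) with ht_def
      have himg : ∑ j ∈ t, |a ((j : ℤ) + c)| = ∑ k ∈ s, |a k| := by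
        rw [ht_def, Finset.sum_image ?_]
        · refine Finset.sum_congr rfl fun k hk => ?_
          have hck := hc k hk
          have hkk : (((k - c).toNat : ℤ)) + c = k := by omega
          rw [hkk]
        · intro x hx y hy h
          have := hc x hx
          have := hc y hy
          simp only at h
          omega
      have hsum_le : (∑ j ∈ t, |a ((j : ℤ) + c)|) ≤ ∑' j : ℕ, |a ((j : ℤ) + c)| :=
        Summable.sum_le_tsum t (fun _ _ => abs_nonneg _) (hshift _ (by intro x y h; simp only at h; omega))
      have hcongr : (∑' j : ℕ, |a ((j : ℤ) + c)|) =
          ∑' j : ℕ, |a ((j : ℤ) + (N : ℤ) - (i : ℤ))| := by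
        refine tsum_congr fun j => ?_
        congr 1
        simp only [hc_def]
        ring_nf
      rw [← hcongr]
      calc S - δ < ∑ k ∈ s, |a k| := hs
        _ = ∑ j ∈ t, |a ((j : ℤ) + c)| := himg.symm
        _ ≤ ∑' j : ℕ, |a ((j : ℤ) + c)| := hsum_le
    -- combine
    have hcomb : S + V - 4 * δ ≤ ∑' j, |b j| := by
      rw [← hsplit]
      have := htail1
      linarith
    have : S + V - 5 * δ ≤ f i := by linarith
    have h5 : 5 * δ = ε := by rw [hδdef]; ring
    linarith
  refine le_of_forall_pos_le_add fun ε hε => ?_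
  obtain ⟨i, hi⟩ := key ε hε
  have hle : f i ≤ ⨆ i, f i := le_ciSup hbdd i
  linarith
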